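/- Let W^i, W^j be independent standard Brownian motions and K_t(x) = -x/(√(2π)t^{3/2})e^{-x²/(2t)}. There exists a constant C such that for all 0 < θ < u ≤ T, (E[K_{u−θ}(W^i_u − W^j_θ)⁴])^{1/4} ≤ C u^{-1/8} (u−θ)^{-7/8}. -/

import Mathlib

open MeasureTheory ProbabilityTheory Real

/-- The Keller–Segel kernel `K_t(x) = -x/(√(2π) t^{3/2}) e^{-x²/(2t)}`. -/
noncomputable def K (t x : ℝ) : ℝ :=
  -x / (Real.sqrt (2 * Real.pi) * t ^ ((3 : ℝ) / 2)) * Real.exp (-x ^ 2 / (2 * t))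

/-- `W` is a Brownian motion with arbitrary initial distribution. -/
def IsBM {Ω : Type} [MeasurableSpace Ω] (P : Measure Ω) (W : ℝ → Ω → ℝ) : Prop :=
  (∀ ω, Continuous fun t => W t ω) ∧
  (∀ t : ℝ, Measurable (W t)) ∧
  (∀ s t : ℝ, 0 ≤ s → s ≤ t →
    P.map (fun ω => W t ω - W s ω) = gaussianReal 0 (Real.toNNReal (t - s))) ∧
  (∀ n : ℕ, ∀ t : Fin (n + 1) → ℝ, Monotone t → (∀ i, 0 ≤ t i) →
    iIndepFun
      (fun i : Fin n => fun ω => W (t i.succ) ω - W (t i.castSucc) ω) P)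

noncomputable def C₀ : ℝ := ∫ w : ℝ, w ^ 4 * Real.exp (-2 * w ^ 2)

lemma C₀_def : C₀ = ∫ w : ℝ, w ^ 4 * Real.exp (-2 * w ^ 2) := rfl

lemma C₀_nonneg : 0 ≤ C₀ :=
  integral_nonneg fun w => by positivity

lemma K_pow_eq {s : ℝ} (hs : 0 < s) (z : ℝ) :
    (K s z) ^ 4 = (4 * Real.pi ^ 2 * s ^ 6)⁻¹ * (z ^ 4 * Real.exp (-(2 / s) * z ^ 2)) := by
  have h2π : (0:ℝ) < 2 * Real.pi := by positivity
  have hsq : Real.sqrt (2 * Real.pi) ^ 4 = (2 * Real.pi) ^ 2 := by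
    rw [show (4:ℕ) = 2 * 2 from rfl, pow_mul, Real.sq_sqrt h2π.le]
  have hrs : (s ^ ((3:ℝ)/2)) ^ 4 = s ^ 6 := by
    rw [← Real.rpow_natCast (s ^ ((3:ℝ)/2)) 4, ← Real.rpow_mul hs.le,
      show (3:ℝ)/2 * (4:ℕ) = ((6:ℕ):ℝ) by norm_num, Real.rpow_natCast]
  have hexp : Real.exp (-z ^ 2 / (2 * s)) ^ 4 = Real.exp (-(2 / s) * z ^ 2) := by
    rw [← Real.exp_nat_mul]
    ring_nf
  rw [K, mul_pow, div_pow, mul_pow, hsq, hrs, hexp]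
  rw [show (-z) ^ 4 = z ^ 4 by ring]
  field_simp
  ring

lemma integrable_K_pow {s : ℝ} (hs : 0 < s) :
    MeasureTheory.Integrable (fun z : ℝ => (K s z) ^ 4) := by
  have hb : (0:ℝ) < 2 / s := by positivity
  have h := (integrable_rpow_mul_exp_neg_mul_sq hb (s := 4) (by norm_num)).const_mul
    ((4 * Real.pi ^ 2 * s ^ 6)⁻¹)
  refine h.congr (Filter.Eventually.of_forall fun z => ?_)
  show (4 * Real.pi ^ 2 * s ^ 6)⁻¹ * (z ^ (4:ℝ) * Real.exp (-(2/s) * z ^ 2)) = K s z ^ 4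
  have hz4 : z ^ (4:ℝ) = z ^ (4:ℕ) := by
    rw [← Real.rpow_natCast z 4]; norm_num
  rw [hz4, K_pow_eq hs z]

lemma integral_K_pow {s : ℝ} (hs : 0 < s) :
    ∫ z : ℝ, (K s z) ^ 4 = C₀ / (4 * Real.pi ^ 2) * s ^ (-(7:ℝ)/2) := by
  have hss : Real.sqrt s ≠ 0 := by positivity
  have hinner : ∫ z : ℝ, z ^ 4 * Real.exp (-(2 / s) * z ^ 2)
      = s ^ 2 * Real.sqrt s * C₀ := by
    have h := MeasureTheory.Measure.integral_comp_mul_left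
      (fun w : ℝ => w ^ 4 * Real.exp (-2 * w ^ 2)) ((Real.sqrt s)⁻¹)
    have heq : ∀ z : ℝ, ((Real.sqrt s)⁻¹ * z) ^ 4 * Real.exp (-2 * ((Real.sqrt s)⁻¹ * z) ^ 2)
        = (s ^ 2)⁻¹ * (z ^ 4 * Real.exp (-(2 / s) * z ^ 2)) := by
      intro z
      have h1 : ((Real.sqrt s)⁻¹) ^ 2 = s⁻¹ := by
        rw [← Real.sqrt_inv]; exact Real.sq_sqrt (by positivity)
      have h4 : ((Real.sqrt s)⁻¹) ^ 4 = (s ^ 2)⁻¹ := by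
        rw [show (4:ℕ) = 2 * 2 from rfl, pow_mul, h1, inv_pow]
      have : -2 * ((Real.sqrt s)⁻¹ * z) ^ 2 = -(2 / s) * z ^ 2 := by
        rw [mul_pow, h1]; field_simp
      rw [mul_pow, h4, this]; ring
    simp only [heq] at h
    rw [MeasureTheory.integral_const_mul] at h
    have hs2 : (s ^ 2 : ℝ) ≠ 0 := by positivity
    have h2 : ∫ z : ℝ, z ^ 4 * Real.exp (-(2 / s) * z ^ 2)
        = s ^ 2 * ((s ^ 2)⁻¹ * ∫ z : ℝ, z ^ 4 * Real.exp (-(2 / s) * z ^ 2)) := by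
      rw [← mul_assoc, mul_inv_cancel₀ hs2, one_mul]
    rw [h2, h, ← C₀_def, inv_inv, abs_of_nonneg (Real.sqrt_nonneg s), smul_eq_mul]
    ring
  calc ∫ z : ℝ, (K s z) ^ 4
      = ∫ z : ℝ, (4 * Real.pi ^ 2 * s ^ 6)⁻¹ * (z ^ 4 * Real.exp (-(2 / s) * z ^ 2)) := by
        exact integral_congr_ae (Filter.Eventually.of_forall fun z => K_pow_eq hs z)
    _ = (4 * Real.pi ^ 2 * s ^ 6)⁻¹ * (s ^ 2 * Real.sqrt s * C₀) := by
        rw [MeasureTheory.integral_const_mul, hinner]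
    _ = C₀ / (4 * Real.pi ^ 2) * s ^ (-(7:ℝ)/2) := by
        rw [Real.sqrt_eq_rpow,
          show (s:ℝ) ^ (2:ℕ) = s ^ (2:ℝ) by rw [← Real.rpow_natCast s 2]; norm_num,
          show (s:ℝ) ^ (6:ℕ) = s ^ (6:ℝ) by rw [← Real.rpow_natCast s 6]; norm_num]
        have key : s ^ (2:ℝ) * s ^ ((1:ℝ)/2) * (s ^ (6:ℝ))⁻¹ = s ^ (-(7:ℝ)/2) := by
          rw [← Real.rpow_add hs, ← Real.rpow_neg hs.le, ← Real.rpow_add hs]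
          norm_num
        rw [← key]
        ring

/-- There is a constant `C` such that for independent standard Brownian motions `W^i, W^j`
and all `0 < θ < u ≤ T`,
`(E[K_{u−θ}(W^i_u − W^j_θ)⁴])^{1/4} ≤ C u^{-1/8} (u−θ)^{-7/8}`. -/
theorem fourth_moment_kernel_estimate :
    ∃ C : ℝ,
      ∀ (Ω : Type) (m : MeasurableSpace Ω) (P : Measure Ω),
        IsProbabilityMeasure P →
        ∀ (Wi Wj : ℝ → Ω → ℝ), IsBM P Wi → IsBM P Wj →
          (∀ ω, Wi 0 ω = 0) → (∀ ω, Wj 0 ω = 0) →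
          Indep (⨆ t : ℝ, MeasurableSpace.comap (Wi t) Real.measurableSpace)
                (⨆ t : ℝ, MeasurableSpace.comap (Wj t) Real.measurableSpace) P →
          ∀ T θ u : ℝ, 0 < θ → θ < u → u ≤ T →
            (∫ ω, (K (u - θ) (Wi u ω - Wj θ ω)) ^ 4 ∂P) ^ ((1 : ℝ) / 4)
              ≤ C * u ^ (-(1 : ℝ) / 8) * (u - θ) ^ (-(7 : ℝ) / 8) := by
  classical
  refine ⟨((2 * Real.pi) ^ (-(1:ℝ)/2) * (C₀ / (4 * Real.pi ^ 2))) ^ ((1:ℝ)/4), ?_⟩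
  intro Ω m P hP Wi Wj hWi hWj hWi0 hWj0 hIndep T θ u hθ hθu huT
  set s : ℝ := u - θ with hs_def
  have hs : 0 < s := sub_pos.mpr hθu
  have hu : 0 < u := hθ.trans hθu
  set μ : Measure ℝ := gaussianReal 0 u.toNNReal with hμ_def
  set ν : Measure ℝ := gaussianReal 0 θ.toNNReal with hν_def
  -- laws of the marginals
  have hmapWi : P.map (Wi u) = μ := by
    have h := hWi.2.2.1 0 u le_rfl hu.le
    simpa [hWi0] using h
  have hmapWj : P.map (Wj θ) = ν := by
    have h := hWj.2.2.1 0 θ le_rfl hθ.le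
    simpa [hWj0] using h
  -- independence of the two coordinates
  have hIF : IndepFun (Wi u) (Wj θ) P :=
    indep_of_indep_of_le_right
      (indep_of_indep_of_le_left hIndep
        (le_iSup (fun t => MeasurableSpace.comap (Wi t) Real.measurableSpace) u))
      (le_iSup (fun t => MeasurableSpace.comap (Wj t) Real.measurableSpace) θ)
  have hprod : P.map (fun ω => (Wi u ω, Wj θ ω)) = μ.prod ν := by
    rw [← hmapWi, ← hmapWj]
    exact (indepFun_iff_map_prod_eq_prod_map_map
      (hWi.2.1 u).aemeasurable (hWj.2.1 θ).aemeasurable).mp hIF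
  -- measurability facts
  have hKmeas : Measurable fun z : ℝ => (K s z) ^ 4 := by
    unfold K; fun_prop
  have hfmeas : Measurable fun p : ℝ × ℝ => ENNReal.ofReal ((K s (p.1 - p.2)) ^ 4) :=
    (hKmeas.comp (measurable_fst.sub measurable_snd)).ennreal_ofReal
  have hXmeas : Measurable fun ω => Wi u ω - Wj θ ω := (hWi.2.1 u).sub (hWj.2.1 θ)
  -- from Bochner integral to lintegral
  have hint_eq : ∫ ω, (K s (Wi u ω - Wj θ ω)) ^ 4 ∂P
      = (∫⁻ ω, ENNReal.ofReal ((K s (Wi u ω - Wj θ ω)) ^ 4) ∂P).toReal := by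
    exact integral_eq_lintegral_of_nonneg_ae
      (Filter.Eventually.of_forall fun ω =>
        (by decide : Even 4).pow_nonneg (K s (Wi u ω - Wj θ ω)))
      (hKmeas.comp hXmeas).aestronglyMeasurable
  -- transport to the product of the two Gaussian laws
  have hlin1 : ∫⁻ ω, ENNReal.ofReal ((K s (Wi u ω - Wj θ ω)) ^ 4) ∂P
      = ∫⁻ p : ℝ × ℝ, ENNReal.ofReal ((K s (p.1 - p.2)) ^ 4) ∂(μ.prod ν) := by
    rw [← hprod, lintegral_map hfmeas ((hWi.2.1 u).prodMk (hWj.2.1 θ))]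
  have hlin2 : ∫⁻ p : ℝ × ℝ, ENNReal.ofReal ((K s (p.1 - p.2)) ^ 4) ∂(μ.prod ν)
      = ∫⁻ y, ∫⁻ x, ENNReal.ofReal ((K s (x - y)) ^ 4) ∂μ ∂ν :=
    lintegral_prod_symm _ hfmeas.aemeasurable
  -- the inner integral bound, using that the Gaussian density is bounded
  have hu' : u.toNNReal ≠ 0 := fun h =>
    absurd (Real.toNNReal_eq_zero.mp h) (not_le.mpr hu)
  have hpdf_le : ∀ x : ℝ, gaussianPDF 0 u.toNNReal x
      ≤ ENNReal.ofReal ((Real.sqrt (2 * Real.pi * u))⁻¹) := by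
    intro x
    rw [gaussianPDF]
    apply ENNReal.ofReal_le_ofReal
    rw [gaussianPDFReal, Real.coe_toNNReal u hu.le]
    have hexp : Real.exp (-(x - 0) ^ 2 / (2 * u)) ≤ 1 := by
      rw [Real.exp_le_one_iff]
      exact div_nonpos_iff.mpr (Or.inr ⟨neg_nonpos.mpr (sq_nonneg _), by positivity⟩)
    calc (Real.sqrt (2 * Real.pi * u))⁻¹ * Real.exp (-(x - 0) ^ 2 / (2 * u))
        ≤ (Real.sqrt (2 * Real.pi * u))⁻¹ * 1 := by
          apply mul_le_mul_of_nonneg_left hexp (by positivity)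
      _ = (Real.sqrt (2 * Real.pi * u))⁻¹ := mul_one _
  have hKint : ∫ z : ℝ, (K s z) ^ 4 = C₀ / (4 * Real.pi ^ 2) * s ^ (-(7:ℝ)/2) :=
    integral_K_pow hs
  have hinner : ∀ y : ℝ, ∫⁻ x, ENNReal.ofReal ((K s (x - y)) ^ 4) ∂μ
      ≤ ENNReal.ofReal ((Real.sqrt (2 * Real.pi * u))⁻¹)
        * ENNReal.ofReal (C₀ / (4 * Real.pi ^ 2) * s ^ (-(7:ℝ)/2)) := by
    intro y
    have hKy : Measurable fun x : ℝ => ENNReal.ofReal ((K s (x - y)) ^ 4) :=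
      (hKmeas.comp (measurable_id.sub measurable_const)).ennreal_ofReal
    rw [hμ_def, gaussianReal_of_var_ne_zero 0 hu',
      lintegral_withDensity_eq_lintegral_mul _ (measurable_gaussianPDF 0 u.toNNReal) hKy]
    calc ∫⁻ x, (gaussianPDF 0 u.toNNReal * fun x => ENNReal.ofReal ((K s (x - y)) ^ 4)) x
        ≤ ∫⁻ x, ENNReal.ofReal ((Real.sqrt (2 * Real.pi * u))⁻¹)
            * ENNReal.ofReal ((K s (x - y)) ^ 4) := by
          refine lintegral_mono fun x => ?_
          exact mul_le_mul_left (hpdf_le x) _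
      _ = ENNReal.ofReal ((Real.sqrt (2 * Real.pi * u))⁻¹)
            * ∫⁻ x, ENNReal.ofReal ((K s (x - y)) ^ 4) := lintegral_const_mul _ hKy
      _ = ENNReal.ofReal ((Real.sqrt (2 * Real.pi * u))⁻¹)
            * ∫⁻ z, ENNReal.ofReal ((K s z) ^ 4) := by
          congr 1
          have := lintegral_add_right_eq_self
            (μ := (volume : Measure ℝ)) (fun z => ENNReal.ofReal ((K s z) ^ 4)) (-y)
          simpa [sub_eq_add_neg] using this
      _ = ENNReal.ofReal ((Real.sqrt (2 * Real.pi * u))⁻¹)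
            * ENNReal.ofReal (C₀ / (4 * Real.pi ^ 2) * s ^ (-(7:ℝ)/2)) := by
          rw [← ofReal_integral_eq_lintegral_ofReal (integrable_K_pow hs)
            (Filter.Eventually.of_forall fun z => (by decide : Even 4).pow_nonneg (K s z)), hKint]
  -- the outer integral
  have houter : ∫⁻ y, ∫⁻ x, ENNReal.ofReal ((K s (x - y)) ^ 4) ∂μ ∂ν
      ≤ ENNReal.ofReal ((Real.sqrt (2 * Real.pi * u))⁻¹)
        * ENNReal.ofReal (C₀ / (4 * Real.pi ^ 2) * s ^ (-(7:ℝ)/2)) := by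
    calc ∫⁻ y, ∫⁻ x, ENNReal.ofReal ((K s (x - y)) ^ 4) ∂μ ∂ν
        ≤ ∫⁻ _, (ENNReal.ofReal ((Real.sqrt (2 * Real.pi * u))⁻¹)
            * ENNReal.ofReal (C₀ / (4 * Real.pi ^ 2) * s ^ (-(7:ℝ)/2))) ∂ν :=
          lintegral_mono hinner
      _ = _ := by
          rw [lintegral_const]
          simp [hν_def]
  -- the real bound
  have hDnn : 0 ≤ C₀ / (4 * Real.pi ^ 2) * s ^ (-(7:ℝ)/2) := by
    have := C₀_nonneg
    positivity
  have hle : ∫ ω, (K s (Wi u ω - Wj θ ω)) ^ 4 ∂P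
      ≤ (Real.sqrt (2 * Real.pi * u))⁻¹ * (C₀ / (4 * Real.pi ^ 2) * s ^ (-(7:ℝ)/2)) := by
    rw [hint_eq, hlin1, hlin2]
    have h1 : (∫⁻ y, ∫⁻ x, ENNReal.ofReal ((K s (x - y)) ^ 4) ∂μ ∂ν).toReal
        ≤ (ENNReal.ofReal ((Real.sqrt (2 * Real.pi * u))⁻¹)
          * ENNReal.ofReal (C₀ / (4 * Real.pi ^ 2) * s ^ (-(7:ℝ)/2))).toReal :=
      ENNReal.toReal_mono (ENNReal.mul_ne_top ENNReal.ofReal_ne_top ENNReal.ofReal_ne_top)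
        houter
    refine h1.trans_eq ?_
    rw [ENNReal.toReal_mul, ENNReal.toReal_ofReal (by positivity),
      ENNReal.toReal_ofReal hDnn]
  -- nonnegativity of the integral
  have hInn : 0 ≤ ∫ ω, (K s (Wi u ω - Wj θ ω)) ^ 4 ∂P :=
    integral_nonneg fun ω => (by decide : Even 4).pow_nonneg _
  -- rewrite the bound in rpow form
  have hA : (Real.sqrt (2 * Real.pi * u))⁻¹
      = (2 * Real.pi) ^ (-(1:ℝ)/2) * u ^ (-(1:ℝ)/2) := by
    rw [Real.sqrt_mul (by positivity) u, mul_inv, Real.sqrt_eq_rpow, Real.sqrt_eq_rpow,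
      ← Real.rpow_neg (by positivity : (0:ℝ) ≤ 2 * Real.pi), ← Real.rpow_neg hu.le]
    norm_num
  -- final rpow manipulation
  have ha1 : (0:ℝ) ≤ (2 * Real.pi) ^ (-(1:ℝ)/2) * (C₀ / (4 * Real.pi ^ 2)) := by
    have := C₀_nonneg
    positivity
  have ha2 : (0:ℝ) ≤ u ^ (-(1:ℝ)/2) := Real.rpow_nonneg hu.le _
  have ha3 : (0:ℝ) ≤ s ^ (-(7:ℝ)/2) := Real.rpow_nonneg hs.le _
  have hB4 : ((Real.sqrt (2 * Real.pi * u))⁻¹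
        * (C₀ / (4 * Real.pi ^ 2) * s ^ (-(7:ℝ)/2))) ^ ((1:ℝ)/4)
      = ((2 * Real.pi) ^ (-(1:ℝ)/2) * (C₀ / (4 * Real.pi ^ 2))) ^ ((1:ℝ)/4)
        * u ^ (-(1:ℝ)/8) * s ^ (-(7:ℝ)/8) := by
    rw [hA, show (2 * Real.pi) ^ (-(1:ℝ)/2) * u ^ (-(1:ℝ)/2)
        * (C₀ / (4 * Real.pi ^ 2) * s ^ (-(7:ℝ)/2))
      = ((2 * Real.pi) ^ (-(1:ℝ)/2) * (C₀ / (4 * Real.pi ^ 2)))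
        * (u ^ (-(1:ℝ)/2) * s ^ (-(7:ℝ)/2)) by ring]
    rw [Real.mul_rpow ha1 (mul_nonneg ha2 ha3), Real.mul_rpow ha2 ha3,
      ← Real.rpow_mul hu.le, ← Real.rpow_mul hs.le, mul_assoc]
    norm_num
  calc (∫ ω, (K s (Wi u ω - Wj θ ω)) ^ 4 ∂P) ^ ((1:ℝ)/4)
      ≤ ((Real.sqrt (2 * Real.pi * u))⁻¹
          * (C₀ / (4 * Real.pi ^ 2) * s ^ (-(7:ℝ)/2))) ^ ((1:ℝ)/4) :=
        Real.rpow_le_rpow hInn hle (by norm_num)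
    _ = _ := hB4
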